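/- Let G be a finite simple graph with minimum degree at least 1, maximum degree at most 4, whose line graph L(G) is 3-connected, and suppose every vertex of degree 4 in G has exactly one neighbour of degree 1. Then the graph G₁ obtained from G by deleting all vertices of degree 1 has all vertex degrees equal to 2 or 3. -/

import Mathlib

open SimpleGraph

/-- A graph is 3-connected: at least 4 vertices, and deleting any set of at most 2
vertices leaves a connected graph. -/
def ThreeConnected {W : Type*} (H : SimpleGraph W) : Prop :=
  4 ≤ Nat.card W ∧ ∀ s : Set W, s.ncard ≤ 2 → (H.induce sᶜ).Connected

lemma ncard_incidence_eq {V : Type*} (G : SimpleGraph V) (v : V) :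
    (G.incidenceSet v).ncard = (G.neighborSet v).ncard := by
  classical
  rw [← Nat.card_coe_set_eq, ← Nat.card_coe_set_eq]
  exact Nat.card_congr (G.incidenceSetEquivNeighborSet v)

lemma key_deg_sum {V : Type*} [Fintype V] (G : SimpleGraph V)
    (h3 : ThreeConnected G.lineGraph) {u v : V} (huv : G.Adj u v) :
    5 ≤ (G.neighborSet u).ncard + (G.neighborSet v).ncard := by
  by_contra hlt
  push_neg at hlt
  have hsum : (G.neighborSet u).ncard + (G.neighborSet v).ncard ≤ 4 := by omega
  have : Finite (Sym2 V) := inferInstance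
  have hfinE : Finite G.edgeSet := Subtype.finite
  set e : G.edgeSet := ⟨s(u, v), huv⟩ with he_def
  set s : Set G.edgeSet :=
    {f | f ≠ e ∧ (u ∈ (f : Sym2 V) ∨ v ∈ (f : Sym2 V))} with hs_def
  -- bound on s
  have himg : Subtype.val '' s ⊆
      (G.incidenceSet u \ {s(u, v)}) ∪ (G.incidenceSet v \ {s(u, v)}) := by
    rintro x ⟨⟨x', hx'⟩, ⟨hne, hmem⟩, rfl⟩
    have hx'' : x' ∈ G.edgeSet := hx'
    have hxne : x' ≠ s(u, v) := fun h => hne (Subtype.ext h)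
    rcases hmem with h | h
    · exact Or.inl ⟨⟨hx'', h⟩, hxne⟩
    · exact Or.inr ⟨⟨hx'', h⟩, hxne⟩
  have hcard_u : (G.incidenceSet u \ {s(u, v)}).ncard = (G.neighborSet u).ncard - 1 := by
    rw [Set.ncard_diff_singleton_of_mem ((G.mem_incidenceSet u v).2 huv),
      ncard_incidence_eq]
  have hcard_v : (G.incidenceSet v \ {s(u, v)}).ncard = (G.neighborSet v).ncard - 1 := by
    have : s(u, v) ∈ G.incidenceSet v := by
      rw [Sym2.eq_swap]; exact (G.mem_incidenceSet v u).2 huv.symm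
    rw [Set.ncard_diff_singleton_of_mem this, ncard_incidence_eq]
  have hdu : 1 ≤ (G.neighborSet u).ncard := by
    have : v ∈ G.neighborSet u := huv
    have := (Set.ncard_pos (Set.toFinite _)).2 ⟨v, this⟩; omega
  have hdv : 1 ≤ (G.neighborSet v).ncard := by
    have : u ∈ G.neighborSet v := huv.symm
    have := (Set.ncard_pos (Set.toFinite _)).2 ⟨u, this⟩; omega
  have hscard : s.ncard ≤ 2 := by
    have h1 : s.ncard = (Subtype.val '' s).ncard :=
      (Set.ncard_image_of_injective _ Subtype.val_injective).symm
    have h2 := Set.ncard_le_ncard himg (Set.toFinite _)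
    have h3' := Set.ncard_union_le (G.incidenceSet u \ {s(u, v)})
      (G.incidenceSet v \ {s(u, v)})
    omega
  -- find another vertex
  have hE4 : 4 ≤ Nat.card G.edgeSet := h3.1
  have hex : ∃ f : G.edgeSet, f ∉ insert e s := by
    by_contra hall
    push_neg at hall
    have : (Set.univ : Set G.edgeSet) ⊆ insert e s := fun f _ => hall f
    have h1 := Set.ncard_le_ncard this (Set.toFinite _)
    have h2 := Set.ncard_insert_le e s
    rw [Set.ncard_univ] at h1
    omega
  obtain ⟨f, hf⟩ := hex
  have hfe : f ≠ e := fun h => hf (h ▸ Set.mem_insert _ _)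
  have hfs : f ∈ sᶜ := fun h => hf (Set.mem_insert_of_mem _ h)
  have hes : e ∈ sᶜ := by
    intro h
    exact h.1 rfl
  have hconn := h3.2 s hscard
  obtain ⟨p⟩ := hconn.preconnected ⟨e, hes⟩ ⟨f, hfs⟩
  cases p with
  | nil => exact hfe rfl
  | cons h p =>
    rename_i w
    have hadj : G.lineGraph.Adj e w.val := h
    obtain ⟨hne, x, hx1, hx2⟩ := lineGraph_adj_iff_exists.1 hadj
    have hws : w.val ∈ s := by
      refine ⟨hne.symm, ?_⟩
      have : x = u ∨ x = v := Sym2.mem_iff.1 hx1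
      rcases this with rfl | rfl
      · exact Or.inl hx2
      · exact Or.inr hx2
    exact w.2 hws

/-- Let `G` be a finite connected graph with all degrees between 1 and 4, whose line
graph is 3-connected, in which every degree-4 vertex has exactly one neighbour of
degree 1. Then the graph obtained from `G` by deleting all vertices of degree 1 has all
degrees equal to 2 or 3. -/
theorem stmt_17 {V : Type*} [Fintype V] (G : SimpleGraph V) (hG : G.Connected)
    (hmin : ∀ v : V, 1 ≤ (G.neighborSet v).ncard)
    (hmax : ∀ v : V, (G.neighborSet v).ncard ≤ 4)
    (h3 : ThreeConnected G.lineGraph)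
    (hfour : ∀ u : V, (G.neighborSet u).ncard = 4 →
      ∃! v : V, G.Adj u v ∧ (G.neighborSet v).ncard = 1) :
    ∀ v : {x : V // 2 ≤ (G.neighborSet x).ncard},
      ((G.induce {x : V | 2 ≤ (G.neighborSet x).ncard}).neighborSet v).ncard = 2 ∨
        ((G.induce {x : V | 2 ≤ (G.neighborSet x).ncard}).neighborSet v).ncard = 3 := by
  intro v
  set s₀ : Set V := {x : V | 2 ≤ (G.neighborSet x).ncard} with hs₀
  set N := (G.induce s₀).neighborSet v with hN
  have himg : Subtype.val '' N = G.neighborSet v.val ∩ s₀ := by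
    ext x
    constructor
    · rintro ⟨w, hw, rfl⟩
      exact ⟨hw, w.2⟩
    · rintro ⟨hadj, hx⟩
      exact ⟨⟨x, hx⟩, hadj, rfl⟩
  have hcardN : N.ncard = (G.neighborSet v.val ∩ s₀).ncard := by
    rw [← himg, Set.ncard_image_of_injective _ Subtype.val_injective]
  have hd2 : 2 ≤ (G.neighborSet v.val).ncard := v.2
  have hd4 : (G.neighborSet v.val).ncard ≤ 4 := hmax v.val
  by_cases hle3 : (G.neighborSet v.val).ncard ≤ 3
  · -- all neighbours have degree ≥ 2
    have hinter : G.neighborSet v.val ∩ s₀ = G.neighborSet v.val := by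
      refine Set.inter_eq_left.2 fun w hw => ?_
      by_contra hws
      have hw1 : (G.neighborSet w).ncard = 1 := by
        have := hmin w
        simp only [hs₀, Set.mem_setOf_eq, not_le] at hws
        omega
      have := key_deg_sum G h3 (hw : G.Adj v.val w)
      omega
    rw [hcardN, hinter]
    omega
  · -- degree 4
    have hdeq : (G.neighborSet v.val).ncard = 4 := by omega
    obtain ⟨w₀, ⟨hadj₀, hdeg₀⟩, huniq⟩ := hfour v.val hdeq
    have hinter : G.neighborSet v.val ∩ s₀ = G.neighborSet v.val \ {w₀} := by
      ext w
      simp only [Set.mem_inter_iff, Set.mem_diff, Set.mem_singleton_iff, hs₀,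
        Set.mem_setOf_eq]
      constructor
      · rintro ⟨hw, hws⟩
        refine ⟨hw, fun h => ?_⟩
        rw [h, hdeg₀] at hws; omega
      · rintro ⟨hw, hne⟩
        refine ⟨hw, ?_⟩
        by_contra hws
        push_neg at hws
        have hw1 : (G.neighborSet w).ncard = 1 := by have := hmin w; omega
        exact hne (huniq w ⟨hw, hw1⟩)
    right
    have hmem : w₀ ∈ G.neighborSet v.val := hadj₀
    rw [hcardN, hinter, Set.ncard_diff_singleton_of_mem hmem, hdeq]
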